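/- arXiv:2209.06251 — 6 statements merged into one kernel-verified Lean document; each statement's English description precedes it below -/
import Mathlib

section
/- Let A_1, …, A_L ∈ ℝ^{n×n}, B ∈ ℝ^{n×m}, K_1, …, K_{N_v} ∈ ℝ^{m×n}, let Ω = {ω_1, …, ω_{N_v}} ⊂ ℝ^L with Θ = conv(Ω), and let Y ∈ ℝ^{n×n} be symmetric positive definite. Define A(θ) = Σ_{ℓ=1}^L θ_ℓ A_ℓ and A_v = Σ_{ℓ=1}^L (ω_v)_ℓ A_ℓ. Then the following are equivalent: (i) for every θ ∈ Θ and every c ∈ ℝ^{N_v} with c_v ≥ 0, Σ_v c_v = 1, and Σ_v c_v ω_v = θ, the matrix −(Y(A(θ) + B K(θ)) + (A(θ) + B K(θ))ᵀ Y) is positive definite, where K(θ) = Σ_v c_v K_v; (ii) for every v = 1, …, N_v, the matrix −(Y(A_v + B K_v) + (A_v + B K_v)ᵀ Y) is positive definite. -/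
open Matrix

lemma posDef_convex_sum {n Nv : ℕ} (M : Fin Nv → Matrix (Fin n) (Fin n) ℝ)
    (c : Fin Nv → ℝ) (hc : ∀ v, 0 ≤ c v) (hs : (∑ v, c v) = 1)
    (hM : ∀ v, (M v).PosDef) : (∑ v, c v • M v).PosDef := by
  rw [posDef_iff_dotProduct_mulVec]
  constructor
  · unfold Matrix.IsHermitian
    rw [conjTranspose_sum]
    refine Finset.sum_congr rfl fun v _ => ?_
    rw [conjTranspose_smul, (hM v).1.eq]
    simp
  · intro x hx
    have hmv : ((∑ v, c v • M v) *ᵥ x) = ∑ v, (c v • M v) *ᵥ x :=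
      map_sum (Matrix.mulVec.addMonoidHomLeft x) _ _
    have hquad : star x ⬝ᵥ ((∑ v, c v • M v) *ᵥ x)
        = ∑ v, c v * (star x ⬝ᵥ (M v *ᵥ x)) := by
      rw [hmv]
      rw [show (∑ v, (c v • M v) *ᵥ x) = ∑ v, c v • (M v *ᵥ x) from
        Finset.sum_congr rfl fun v _ => Matrix.smul_mulVec _ _ _]
      simp only [dotProduct, Finset.sum_apply, Pi.smul_apply, smul_eq_mul,
        Finset.mul_sum]
      rw [Finset.sum_comm]
      exact Finset.sum_congr rfl fun v _ => Finset.sum_congr rfl fun i _ => by ring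
    rw [hquad]
    have hex : ∃ v ∈ Finset.univ, 0 < c v * (star x ⬝ᵥ (M v *ᵥ x)) := by
      by_contra h
      push_neg at h
      have hz : ∀ v, c v = 0 := by
        intro v
        by_contra hcv
        have hcpos : 0 < c v := lt_of_le_of_ne (hc v) (Ne.symm hcv)
        exact absurd (mul_pos hcpos ((hM v).dotProduct_mulVec_pos hx)) (not_lt.2 (h v (Finset.mem_univ v)))
      simp [hz] at hs
    exact Finset.sum_pos' (fun v _ => mul_nonneg (hc v) (le_of_lt ((hM v).dotProduct_mulVec_pos hx))) hex

/-- continuous-time version of Lemma 2 of the paper. The gain-scheduled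
quadratic stabilization condition `-(Y(A(θ)+BK(θ)) + (A(θ)+BK(θ))ᵀY) ≻ 0` holds for all
`θ` in the convex hull of the vertices `ω v` and all interpolating coefficients `c` iff
it holds at every vertex. -/
theorem stmt1 {n m L Nv : ℕ}
    (A : Fin L → Matrix (Fin n) (Fin n) ℝ) (B : Matrix (Fin n) (Fin m) ℝ)
    (K : Fin Nv → Matrix (Fin m) (Fin n) ℝ)
    (ω : Fin Nv → (Fin L → ℝ))
    (Y : Matrix (Fin n) (Fin n) ℝ) (hYsymm : Y.IsSymm) (hY : Y.PosDef) :
    (∀ θ ∈ convexHull ℝ (Set.range ω), ∀ c : Fin Nv → ℝ,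
        (∀ v, 0 ≤ c v) → (∑ v, c v) = 1 → (∑ v, c v • ω v) = θ →
        (-(Y * ((∑ ℓ, θ ℓ • A ℓ) + B * (∑ v, c v • K v)) +
            ((∑ ℓ, θ ℓ • A ℓ) + B * (∑ v, c v • K v))ᵀ * Y)).PosDef) ↔
      (∀ v : Fin Nv,
        (-(Y * ((∑ ℓ, ω v ℓ • A ℓ) + B * K v) +
            ((∑ ℓ, ω v ℓ • A ℓ) + B * K v)ᵀ * Y)).PosDef) := by
  constructor
  · intro h v
    have hmem : ω v ∈ convexHull ℝ (Set.range ω) :=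
      subset_convexHull ℝ _ (Set.mem_range_self v)
    have := h (ω v) hmem (fun w => if w = v then 1 else 0)
      (fun w => by positivity) (by simp) (by simp [ite_smul])
    simpa [ite_smul] using this
  · intro h θ hθ c hc hs hsum
    have hθℓ : ∀ ℓ, θ ℓ = ∑ v, c v * ω v ℓ := by
      intro ℓ
      rw [← hsum]
      simp [Finset.sum_apply]
    have hA : (∑ ℓ, θ ℓ • A ℓ) = ∑ v, c v • (∑ ℓ, ω v ℓ • A ℓ) := by
      simp only [hθℓ, Finset.sum_smul, Finset.smul_sum, mul_smul]
      exact Finset.sum_comm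
    have hK : B * (∑ v, c v • K v) = ∑ v, c v • (B * K v) := by
      rw [Matrix.mul_sum]
      exact Finset.sum_congr rfl fun v _ => Matrix.mul_smul _ _ _
    have hcomb : (∑ ℓ, θ ℓ • A ℓ) + B * (∑ v, c v • K v)
        = ∑ v, c v • ((∑ ℓ, ω v ℓ • A ℓ) + B * K v) := by
      rw [hA, hK, ← Finset.sum_add_distrib]
      exact Finset.sum_congr rfl fun v _ => (smul_add _ _ _).symm
    have key : (-(Y * ((∑ ℓ, θ ℓ • A ℓ) + B * (∑ v, c v • K v)) +
            ((∑ ℓ, θ ℓ • A ℓ) + B * (∑ v, c v • K v))ᵀ * Y))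
        = ∑ v, c v • (-(Y * ((∑ ℓ, ω v ℓ • A ℓ) + B * K v) +
            ((∑ ℓ, ω v ℓ • A ℓ) + B * K v)ᵀ * Y)) := by
      rw [hcomb, Matrix.mul_sum, transpose_sum, Matrix.sum_mul, ← Finset.sum_add_distrib,
        ← Finset.sum_neg_distrib]
      refine Finset.sum_congr rfl fun v _ => ?_
      rw [Matrix.mul_smul, transpose_smul, Matrix.smul_mul, ← smul_add, ← smul_neg]
    rw [key]
    exact posDef_convex_sum _ c hc hs h
end

section
/- Let Φ be a symmetric (n+T)×(n+T) real matrix partitioned into blocks Φ₁₁ ∈ ℝ^{n×n} (symmetric), Φ₁₂ ∈ ℝ^{n×T}, Φ₂₂ ∈ ℝ^{T×T} (symmetric) with −Φ₂₂ positive definite. Suppose Z ∈ ℝ^{n×T} satisfies Z ∈ QBP(Φ), i.e., Φ₁₁ + Z Φ₁₂ᵀ + Φ₁₂ Zᵀ + Z Φ₂₂ Zᵀ is positive semidefinite. Then (Z + Φ₁₂Φ₂₂⁻¹)(−Φ₂₂)(Z + Φ₁₂Φ₂₂⁻¹)ᵀ ⪯ Φ₁₁ − Φ₁₂Φ₂₂⁻¹Φ₁₂ᵀ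 (in the positive-semidefinite order), and consequently λ_min(−Φ₂₂) · ‖Z + Φ₁₂Φ₂₂⁻¹‖_F² ≤ n · λ_max(Φ₁₁ − Φ₁₂Φ₂₂⁻¹Φ₁₂ᵀ), where ‖·‖_F is the Frobenius norm and λ_min, λ_max denote the smallest and largest eigenvalues of a symmetric matrix. In particular the set QBP(Φ) is bounded. -/
open Matrix

lemma myTrace_eq_sum_eigenvalues {m : ℕ} {A : Matrix (Fin m) (Fin m) ℝ} (hA : A.IsHermitian) :
    A.trace = ∑ i, hA.eigenvalues i := by
  conv_lhs => rw [hA.spectral_theorem, Unitary.conjStarAlgAut_apply]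
  rw [Matrix.trace_mul_cycle]
  rw [show (star (hA.eigenvectorUnitary : Matrix (Fin m) (Fin m) ℝ)) *
      (hA.eigenvectorUnitary : Matrix (Fin m) (Fin m) ℝ) = 1 from
    Matrix.mem_unitaryGroup_iff'.mp hA.eigenvectorUnitary.2, one_mul]
  simp [Matrix.trace_diagonal]

lemma mySub_smul_posSemidef {m : ℕ} {A : Matrix (Fin m) (Fin m) ℝ} (hA : A.IsHermitian)
    {c : ℝ} (hc : ∀ i, c ≤ hA.eigenvalues i) : (A - c • 1).PosSemidef := by
  have hU : (hA.eigenvectorUnitary : Matrix (Fin m) (Fin m) ℝ) *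
      (star (hA.eigenvectorUnitary : Matrix (Fin m) (Fin m) ℝ)) = 1 :=
    Matrix.mem_unitaryGroup_iff.mp hA.eigenvectorUnitary.2
  have key : A - c • 1 = (hA.eigenvectorUnitary : Matrix (Fin m) (Fin m) ℝ) *
      (diagonal (fun i => hA.eigenvalues i - c)) *
      (star (hA.eigenvectorUnitary : Matrix (Fin m) (Fin m) ℝ)) := by
    conv_lhs => rw [hA.spectral_theorem, Unitary.conjStarAlgAut_apply]
    rw [show (diagonal (fun i => hA.eigenvalues i - c)) =
        diagonal (RCLike.ofReal ∘ hA.eigenvalues) - c • 1 by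
      ext i j
      by_cases h : i = j <;>
        simp [h, diagonal_apply, Matrix.sub_apply, Matrix.smul_apply, Matrix.one_apply]]
    rw [Matrix.mul_sub, Matrix.sub_mul, Matrix.mul_smul, Matrix.smul_mul, mul_one, hU]
  rw [key]
  exact (posSemidef_diagonal_iff.mpr (fun i => by simpa using hc i)).mul_mul_conjTranspose_same _

lemma myTrace_nonneg {m : ℕ} {M : Matrix (Fin m) (Fin m) ℝ} (hM : M.PosSemidef) :
    0 ≤ M.trace := by
  refine Finset.sum_nonneg fun i _ => ?_
  exact hM.diag_nonneg

/-- boundedness of the QBP set, Theorem 3.2b of van Waarde et al..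
If `-Φ₂₂ ≻ 0` and `Z ∈ QBP(Φ)`, then
`(Z + Φ₁₂Φ₂₂⁻¹)(-Φ₂₂)(Z + Φ₁₂Φ₂₂⁻¹)ᵀ ⪯ Φ₁₁ - Φ₁₂Φ₂₂⁻¹Φ₁₂ᵀ` and
`λ_min(-Φ₂₂)‖Z + Φ₁₂Φ₂₂⁻¹‖_F² ≤ n λ_max(Φ₁₁ - Φ₁₂Φ₂₂⁻¹Φ₁₂ᵀ)`. -/
theorem stmt4 {n T : ℕ}
    (Φ11 : Matrix (Fin n) (Fin n) ℝ) (Φ12 : Matrix (Fin n) (Fin T) ℝ)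
    (Φ22 : Matrix (Fin T) (Fin T) ℝ)
    (h11 : Φ11.IsSymm) (h22 : Φ22.IsSymm) (hPD : (-Φ22).PosDef)
    (Z : Matrix (Fin n) (Fin T) ℝ)
    (hqbp : (Φ11 + Z * Φ12ᵀ + Φ12 * Zᵀ + Z * Φ22 * Zᵀ).PosSemidef)
    (h1 : (-Φ22).IsHermitian)
    (h2 : (Φ11 - Φ12 * Φ22⁻¹ * Φ12ᵀ).IsHermitian) :
    ((Φ11 - Φ12 * Φ22⁻¹ * Φ12ᵀ) -
        (Z + Φ12 * Φ22⁻¹) * (-Φ22) * (Z + Φ12 * Φ22⁻¹)ᵀ).PosSemidef ∧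
      (⨅ i, h1.eigenvalues i) * (∑ i, ∑ j, ((Z + Φ12 * Φ22⁻¹) i j) ^ 2)
        ≤ (n : ℝ) * (⨆ i, h2.eigenvalues i) := by
  have hdet : IsUnit Φ22.det := by
    have h0 : (-Φ22).det ≠ 0 := ne_of_gt hPD.det_pos
    have : Φ22.det ≠ 0 := by
      intro h
      apply h0
      rw [show (-Φ22) = (-1 : ℝ) • Φ22 by simp, det_smul, h, mul_zero]
    exact isUnit_iff_ne_zero.mpr this
  have e1 : Φ22 * Φ22⁻¹ = 1 := mul_nonsing_inv _ hdet
  have e2 : Φ22⁻¹ * Φ22 = 1 := nonsing_inv_mul _ hdet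
  have e3 : (Φ22⁻¹)ᵀ = Φ22⁻¹ := by
    rw [transpose_nonsing_inv, h22.eq]
  -- the key algebraic identity
  have key : (Φ11 - Φ12 * Φ22⁻¹ * Φ12ᵀ) -
      (Z + Φ12 * Φ22⁻¹) * (-Φ22) * (Z + Φ12 * Φ22⁻¹)ᵀ
      = Φ11 + Z * Φ12ᵀ + Φ12 * Zᵀ + Z * Φ22 * Zᵀ := by
    have d1 : ∀ X : Matrix (Fin T) (Fin n) ℝ, Φ22 * (Φ22⁻¹ * X) = X := fun X => by
      rw [← Matrix.mul_assoc, e1, Matrix.one_mul]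
    have d2 : ∀ X : Matrix (Fin T) (Fin n) ℝ, Φ22⁻¹ * (Φ22 * X) = X := fun X => by
      rw [← Matrix.mul_assoc, e2, Matrix.one_mul]
    rw [transpose_add, transpose_mul, e3]
    simp only [Matrix.add_mul, Matrix.mul_add, Matrix.mul_neg, Matrix.neg_mul,
      Matrix.mul_assoc, d1, d2]
    abel
  constructor
  · rw [key]; exact hqbp
  · set W : Matrix (Fin n) (Fin T) ℝ := Z + Φ12 * Φ22⁻¹ with hW
    set c : ℝ := ⨅ i, h1.eigenvalues i with hc
    have hWH : Wᴴ = Wᵀ := conjTranspose_eq_transpose_of_trivial W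
    have hcle : ∀ i, c ≤ h1.eigenvalues i := fun i =>
      ciInf_le (Set.Finite.bddBelow (Set.finite_range _)) i
    have hA' : ((-Φ22) - c • 1).PosSemidef := mySub_smul_posSemidef h1 hcle
    have hPSD1 : (W * ((-Φ22) - c • 1) * Wᵀ).PosSemidef := by
      rw [← hWH]; exact hA'.mul_mul_conjTranspose_same W
    have t1 : 0 ≤ (W * ((-Φ22) - c • 1) * Wᵀ).trace := myTrace_nonneg hPSD1
    have texp : (W * ((-Φ22) - c • 1) * Wᵀ).trace
        = (W * (-Φ22) * Wᵀ).trace - c * (W * Wᵀ).trace := by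
      rw [Matrix.mul_sub, Matrix.sub_mul, trace_sub, Matrix.mul_smul, Matrix.mul_one,
        Matrix.smul_mul, trace_smul]
      simp
    have step1 : c * (W * Wᵀ).trace ≤ (W * (-Φ22) * Wᵀ).trace := by
      rw [texp] at t1; linarith
    have hM2 : ((Φ11 - Φ12 * Φ22⁻¹ * Φ12ᵀ) - W * (-Φ22) * Wᵀ).PosSemidef := by
      rw [key]; exact hqbp
    have step2 : (W * (-Φ22) * Wᵀ).trace ≤ (Φ11 - Φ12 * Φ22⁻¹ * Φ12ᵀ).trace := by
      have := myTrace_nonneg hM2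
      rw [trace_sub] at this; linarith
    have step3 : (Φ11 - Φ12 * Φ22⁻¹ * Φ12ᵀ).trace ≤ (n : ℝ) * (⨆ i, h2.eigenvalues i) := by
      rw [myTrace_eq_sum_eigenvalues h2]
      calc ∑ i, h2.eigenvalues i ≤ ∑ _i : Fin n, (⨆ i, h2.eigenvalues i) :=
            Finset.sum_le_sum fun i _ =>
              le_ciSup (Set.Finite.bddAbove (Set.finite_range _)) i
        _ = (n : ℝ) * (⨆ i, h2.eigenvalues i) := by
            simp [Finset.sum_const, nsmul_eq_mul]
    have htr : (W * Wᵀ).trace = ∑ i, ∑ j, (W i j) ^ 2 := by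
      simp [Matrix.trace, Matrix.diag, Matrix.mul_apply, pow_two]
    calc c * (∑ i, ∑ j, (W i j) ^ 2) = c * (W * Wᵀ).trace := by rw [htr]
      _ ≤ (W * (-Φ22) * Wᵀ).trace := step1
      _ ≤ (Φ11 - Φ12 * Φ22⁻¹ * Φ12ᵀ).trace := step2
      _ ≤ (n : ℝ) * (⨆ i, h2.eigenvalues i) := step3
end

section
/- Let X₋, X_δ ∈ ℝ^{n×T}, U ∈ ℝ^{m×T}, Θdata ∈ ℝ^{L×T}, and let Φ ∈ S^{n+T} be symmetric with blocks Φ₁₁ ∈ S^n, Φ₁₂ ∈ ℝ^{n×T}, Φ₂₂ ∈ S^T. Let H ∈ ℝ^{(Ln+m)×T} be the matrix whose first Ln rows are the column-wise Khatri–Rao product Θdata ⊗_col X₋ (with entry at row (ℓ,i), column t equal to (Θdata)_{ℓt}(X₋)_{it}) and whose last m rows are U, let R = [I_n, X_δ; 0, −H] ∈ ℝ^{(n+Ln+m)×(n+T)}, and let Ψ = RΦRᵀ. Then for every plant given by A_1, …, A_L ∈ ℝ^{n×n} and B ∈ ℝ^{n×m}, writing Z = [A_1, …, A_L, B] ∈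 ℝ^{n×(Ln+m)} and W = X_δ − Z H ∈ ℝ^{n×T}, one has the quadratic-form identity Ψ₁₁ + Z Ψ₁₂ᵀ + Ψ₁₂ Zᵀ + Z Ψ₂₂ Zᵀ = Φ₁₁ + W Φ₁₂ᵀ + Φ₁₂ Wᵀ + W Φ₂₂ Wᵀ. Consequently W ∈ QBP(Φ) if and only if Z ∈ QBP(Ψ). -/
open Matrix

/-- The data matrix `H ∈ ℝ^{(Ln+m)×T}`: the column-wise Khatri–Rao product
`Θdata ⊗_col X₋` stacked above `U`. -/
def dataH {n m L T : ℕ} (Θd : Matrix (Fin L) (Fin T) ℝ)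
    (Xm : Matrix (Fin n) (Fin T) ℝ) (U : Matrix (Fin m) (Fin T) ℝ) :
    Matrix (Fin L × Fin n ⊕ Fin m) (Fin T) ℝ :=
  Matrix.of fun r t => Sum.elim (fun li => Θd li.1 t * Xm li.2 t) (fun j => U j t) r

/-- The plant matrix `Z = [A₁, …, A_L, B] ∈ ℝ^{n×(Ln+m)}`. -/
def plantZ {n m L : ℕ} (A : Fin L → Matrix (Fin n) (Fin n) ℝ)
    (B : Matrix (Fin n) (Fin m) ℝ) : Matrix (Fin n) (Fin L × Fin n ⊕ Fin m) ℝ :=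
  Matrix.of fun i r => Sum.elim (fun li => A li.1 i li.2) (fun j => B i j) r

/-- QMI representation of the consistency set, Eqs. (18)–(20) of the
paper. With `R = [I, X_δ; 0, -H]` and `Ψ = RΦRᵀ`, the quadratic form of `Ψ` at the
plant `Z = [A₁,…,A_L,B]` equals the quadratic form of `Φ` at the discrepancy
`W = X_δ - ZH`; consequently `W ∈ QBP(Φ)` iff `Z ∈ QBP(Ψ)`. -/
theorem stmt8 {n m L T : ℕ}
    (Xm Xδ : Matrix (Fin n) (Fin T) ℝ) (U : Matrix (Fin m) (Fin T) ℝ)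
    (Θd : Matrix (Fin L) (Fin T) ℝ)
    (Φ11 : Matrix (Fin n) (Fin n) ℝ) (Φ12 : Matrix (Fin n) (Fin T) ℝ)
    (Φ22 : Matrix (Fin T) (Fin T) ℝ) (h11 : Φ11.IsSymm) (h22 : Φ22.IsSymm)
    (A : Fin L → Matrix (Fin n) (Fin n) ℝ) (B : Matrix (Fin n) (Fin m) ℝ) :
    let H := dataH Θd Xm U
    let R : Matrix (Fin n ⊕ (Fin L × Fin n ⊕ Fin m)) (Fin n ⊕ Fin T) ℝ :=
      Matrix.fromBlocks 1 Xδ 0 (-H)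
    let Ψ := R * Matrix.fromBlocks Φ11 Φ12 Φ12ᵀ Φ22 * Rᵀ
    let Z := plantZ A B
    let W := Xδ - Z * H
    (Ψ.toBlocks₁₁ + Z * Ψ.toBlocks₁₂ᵀ + Ψ.toBlocks₁₂ * Zᵀ + Z * Ψ.toBlocks₂₂ * Zᵀ
        = Φ11 + W * Φ12ᵀ + Φ12 * Wᵀ + W * Φ22 * Wᵀ) ∧
      ((Φ11 + W * Φ12ᵀ + Φ12 * Wᵀ + W * Φ22 * Wᵀ).PosSemidef ↔
        (Ψ.toBlocks₁₁ + Z * Ψ.toBlocks₁₂ᵀ + Ψ.toBlocks₁₂ * Zᵀ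
            + Z * Ψ.toBlocks₂₂ * Zᵀ).PosSemidef) := by
  intro H R Ψ Z W
  have hRT : (Matrix.fromBlocks (1 : Matrix (Fin n) (Fin n) ℝ) Xδ 0 (-H))ᵀ
      = Matrix.fromBlocks 1 0 Xδᵀ (-Hᵀ) := by
    rw [Matrix.fromBlocks_transpose]; simp
  have h22' : Φ22ᵀ = Φ22 := h22
  have key : Ψ.toBlocks₁₁ + Z * Ψ.toBlocks₁₂ᵀ + Ψ.toBlocks₁₂ * Zᵀ + Z * Ψ.toBlocks₂₂ * Zᵀ
      = Φ11 + W * Φ12ᵀ + Φ12 * Wᵀ + W * Φ22 * Wᵀ := by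
    simp only [Ψ, R, hRT, Matrix.fromBlocks_multiply,
      Matrix.toBlocks_fromBlocks₁₁, Matrix.toBlocks_fromBlocks₁₂, Matrix.toBlocks_fromBlocks₂₂,
      Matrix.one_mul, Matrix.mul_one, Matrix.zero_mul, Matrix.mul_zero, zero_add, add_zero]
    simp only [W, Matrix.transpose_sub, Matrix.transpose_mul, Matrix.transpose_add,
      Matrix.transpose_neg, Matrix.transpose_transpose, h22']
    simp only [Matrix.sub_mul, Matrix.mul_sub, Matrix.add_mul, Matrix.mul_add,
      Matrix.neg_mul, Matrix.mul_neg, neg_neg, neg_sub, Matrix.mul_assoc]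
    abel
  exact ⟨key, by rw [key]⟩
end

section
/- Let P ∈ ℝ^{n×n} be symmetric positive definite, ω ∈ ℝ^L, K ∈ ℝ^{m×n}, and let M be the symmetric (n+Ln+m)×(n+Ln+m) matrix with blocks M₁₁ = P, M₂₁ = 0, M₃₁ = 0, M₂₂ = −(ωωᵀ) ⊗ P, M₃₂ = −ωᵀ ⊗ (KP) ∈ ℝ^{m×Ln}, M₃₃ = −KPKᵀ, completed symmetrically. Then for every A_1, …, A_L ∈ ℝ^{n×n} and B ∈ ℝ^{n×m}, with Z = [A_1, …, A_L, B] and A_ω := Σ_{ℓ=1}^L ω_ℓ A_ℓ, the quadratic form [I_n, Z] M [I_n, Z]ᵀ equals P − (A_ω + BK) P (A_ω + BK)ᵀ. Consequently Z ∈ SQBP(M) if and only if the 2n×2n block matrix [P, (A_ω + BK)P; P(A_ω + BK)ᵀ, P] is positive definite. -/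
open Matrix

lemma posDef_of_posSemidef_isUnit {N : Type*} [Fintype N] [DecidableEq N]
    {M : Matrix N N ℝ} (h : M.PosSemidef) (hd : IsUnit M) : M.PosDef := by
  refine PosDef.of_dotProduct_mulVec_pos h.1 (fun x hx => ?_)
  rcases (h.dotProduct_mulVec_nonneg x).lt_or_eq with hlt | heq
  · exact hlt
  · exfalso
    have h0 : M *ᵥ x = 0 := (h.dotProduct_mulVec_zero_iff x).mp heq.symm
    have hinj := Matrix.mulVec_injective_iff_isUnit.mpr hd
    apply hx
    have : M *ᵥ x = M *ᵥ 0 := by simpa using h0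
    exact hinj this

lemma posDef_fromBlocks₂₂' {p q : Type*} [Fintype p] [DecidableEq p] [Fintype q] [DecidableEq q]
    (Am : Matrix p p ℝ) (Bm : Matrix p q ℝ) {D : Matrix q q ℝ} (hD : D.PosDef) :
    (Matrix.fromBlocks Am Bm Bmᴴ D).PosDef ↔ (Am - Bm * D⁻¹ * Bmᴴ).PosDef := by
  have hDdet : IsUnit D.det := isUnit_iff_ne_zero.mpr hD.det_pos.ne'
  haveI : Invertible D := D.invertibleOfIsUnitDet hDdet
  have hdet : (Matrix.fromBlocks Am Bm Bmᴴ D).det = D.det * (Am - Bm * D⁻¹ * Bmᴴ).det := by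
    rw [Matrix.det_fromBlocks₂₂, Matrix.invOf_eq_nonsing_inv]
  constructor
  · intro h
    have hs := (Matrix.PosDef.fromBlocks₂₂ Am Bm hD).mp h.posSemidef
    refine posDef_of_posSemidef_isUnit hs ?_
    rw [Matrix.isUnit_iff_isUnit_det]
    have hbig : IsUnit (Matrix.fromBlocks Am Bm Bmᴴ D).det :=
      isUnit_iff_ne_zero.mpr h.det_pos.ne'
    rw [hdet] at hbig
    exact isUnit_of_mul_isUnit_right hbig
  · intro h
    have hs := (Matrix.PosDef.fromBlocks₂₂ Am Bm hD).mpr h.posSemidef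
    refine posDef_of_posSemidef_isUnit hs ?_
    rw [Matrix.isUnit_iff_isUnit_det, hdet]
    exact (hDdet.mul (isUnit_iff_ne_zero.mpr h.det_pos.ne'))

/-- discrete-time vertex stabilization QMI, Eq. (22) of the paper.
With `M` the symmetric matrix with blocks `M₁₁ = P`, `M₂₂ = -(ωωᵀ) ⊗ P`,
`M₃₂ = -ωᵀ ⊗ (KP)`, `M₃₃ = -KPKᵀ` (other blocks zero, completed symmetrically), the
quadratic form `[I, Z] M [I, Z]ᵀ` at the plant `Z = [A₁,…,A_L,B]` equals
`P - (A_ω + BK)P(A_ω + BK)ᵀ`; consequently `Z ∈ SQBP(M)` iff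
`[P, (A_ω + BK)P; P(A_ω + BK)ᵀ, P] ≻ 0`. -/
theorem stmt10 {n m L : ℕ}
    (P : Matrix (Fin n) (Fin n) ℝ) (hPs : P.IsSymm) (hP : P.PosDef)
    (ω : Fin L → ℝ) (K : Matrix (Fin m) (Fin n) ℝ)
    (A : Fin L → Matrix (Fin n) (Fin n) ℝ) (B : Matrix (Fin n) (Fin m) ℝ) :
    let D22 : Matrix (Fin L × Fin n) (Fin L × Fin n) ℝ :=
      Matrix.of fun p q => -(ω p.1 * ω q.1 * P p.2 q.2)
    let D32 : Matrix (Fin m) (Fin L × Fin n) ℝ :=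
      Matrix.of fun i q => -(ω q.1 * (K * P) i q.2)
    let M : Matrix (Fin n ⊕ (Fin L × Fin n ⊕ Fin m))
        (Fin n ⊕ (Fin L × Fin n ⊕ Fin m)) ℝ :=
      Matrix.fromBlocks P 0 0
        (Matrix.fromBlocks D22 D32ᵀ D32 (-(K * P * Kᵀ)))
    let Z := plantZ A B
    let Aω := ∑ ℓ, ω ℓ • A ℓ
    ((Matrix.fromCols (1 : Matrix (Fin n) (Fin n) ℝ) Z) * M * (Matrix.fromCols (1 : Matrix (Fin n) (Fin n) ℝ) Z)ᵀ
        = P - (Aω + B * K) * P * (Aω + B * K)ᵀ) ∧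
      (((Matrix.fromCols (1 : Matrix (Fin n) (Fin n) ℝ) Z) * M * (Matrix.fromCols (1 : Matrix (Fin n) (Fin n) ℝ) Z)ᵀ).PosDef ↔
        (Matrix.fromBlocks P ((Aω + B * K) * P) (P * (Aω + B * K)ᵀ) P).PosDef) := by
  intro D22 D32 M Z Aω
  have hPt : Pᵀ = P := hPs
  -- structural matrices
  set Z1 : Matrix (Fin n) (Fin L × Fin n) ℝ := Matrix.of (fun i p => A p.1 i p.2) with hZ1
  set u : Matrix (Fin L × Fin n) (Fin n) ℝ :=
    Matrix.of (fun p j => ω p.1 * (if p.2 = j then 1 else 0)) with hu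
  have hZu : Z1 * u = Aω := by
    ext i j
    simp [hZ1, hu, Matrix.mul_apply, Fintype.sum_prod_type, mul_ite, mul_one, mul_zero,
      Aω, Matrix.sum_apply, mul_comm]
  have hD22 : D22 = -(u * P * uᵀ) := by
    ext p q
    simp [hu, Matrix.mul_apply, mul_ite, ite_mul, mul_one, mul_zero, zero_mul, one_mul, D22]
    ring
  have hD32 : D32 = -(K * P * uᵀ) := by
    ext i q
    simp [hu, Matrix.mul_apply, mul_ite, mul_one, mul_zero, D32]
    ring
  have hZeq : Z = Matrix.fromCols Z1 B := by
    ext i r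
    cases r <;> rfl
  have key : (Matrix.fromCols (1 : Matrix (Fin n) (Fin n) ℝ) Z) * M * (Matrix.fromCols (1 : Matrix (Fin n) (Fin n) ℝ) Z)ᵀ
      = P - (Aω + B * K) * P * (Aω + B * K)ᵀ := by
    have hM : M = Matrix.fromBlocks P 0 0
        (Matrix.fromBlocks D22 D32ᵀ D32 (-(K * P * Kᵀ))) := rfl
    rw [hM, hZeq, Matrix.transpose_fromCols, Matrix.transpose_one,
      Matrix.fromCols_mul_fromBlocks, Matrix.fromCols_mul_fromRows]
    rw [hD22, hD32]
    have ht : (-(K * P * uᵀ))ᵀ = -(u * P * Kᵀ) := by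
      simp [Matrix.transpose_mul, Matrix.mul_assoc, hPt]
    rw [ht, Matrix.transpose_fromCols, Matrix.fromCols_mul_fromBlocks]
    simp only [Matrix.one_mul, Matrix.mul_one, Matrix.zero_mul, Matrix.mul_zero,
      add_zero, zero_add]
    rw [Matrix.fromCols_mul_fromRows]
    have e1 : Z1 * -(u * P * uᵀ) * Z1ᵀ = -(Aω * P * Aωᵀ) := by
      rw [← hZu]
      simp only [Matrix.mul_neg, Matrix.neg_mul, Matrix.transpose_mul]
      rw [← Matrix.mul_assoc, ← Matrix.mul_assoc, ← Matrix.mul_assoc, Matrix.mul_assoc]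
    have e2 : Z1 * -(u * P * Kᵀ) = -(Aω * P * Kᵀ) := by
      rw [← hZu]
      simp only [Matrix.mul_neg]
      rw [← Matrix.mul_assoc, ← Matrix.mul_assoc]
    have e3 : B * -(K * P * uᵀ) * Z1ᵀ = -(B * K * P * Aωᵀ) := by
      rw [← hZu]
      simp only [Matrix.mul_neg, Matrix.neg_mul, Matrix.transpose_mul]
      rw [← Matrix.mul_assoc, ← Matrix.mul_assoc, ← Matrix.mul_assoc, Matrix.mul_assoc]
    rw [Matrix.add_mul, Matrix.add_mul, e1, e3, e2]
    rw [Matrix.transpose_add, Matrix.transpose_mul]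
    simp only [Matrix.add_mul, Matrix.mul_add, Matrix.mul_assoc, sub_eq_add_neg, neg_add,
      Matrix.mul_neg, Matrix.neg_mul]
  refine ⟨key, ?_⟩
  rw [key]
  set S := Aω + B * K with hSdef
  have hconj : (S * P)ᴴ = P * Sᵀ := by
    rw [Matrix.conjTranspose_eq_transpose_of_trivial, Matrix.transpose_mul, hPt]
  have := posDef_fromBlocks₂₂' P (S * P) hP
  rw [hconj] at this
  rw [this]
  have hPdet : IsUnit P.det := isUnit_iff_ne_zero.mpr hP.det_pos.ne'
  have hschur : P - S * P * P⁻¹ * (P * Sᵀ) = P - S * P * Sᵀ := by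
    rw [Matrix.mul_assoc S P P⁻¹, Matrix.mul_nonsing_inv P hPdet, Matrix.mul_one,
      Matrix.mul_assoc]
  rw [hschur]
end

section
/- (Soundness of the continuous-time stabilization SDP.) Let X₋, X_δ ∈ ℝ^{n×T}, U ∈ ℝ^{m×T}, Θdata ∈ ℝ^{L×T}, and Φ ∈ S^{n+T} with blocks Φ₁₁ ∈ S^n, Φ₁₂ ∈ ℝ^{n×T}, Φ₂₂ ∈ S^T. Let H ∈ ℝ^{(Ln+m)×T} stack the column-wise Khatri–Rao product Θdata ⊗_col X₋ above U, and Ψ = RΦRᵀ with R = [I_n, X_δ; 0, −H]. Let Σ_D(Φ) be the set of plants (A_1,…,A_L,B) whose discrepancy W = X_δ − [A_1,…,A_L,B] H satisfies Φ₁₁ + WΦ₁₂ᵀ + Φ₁₂Wᵀ + WΦ₂₂Wᵀ ⪰ 0. Let Ω = {ω_1,…,ω_{N_v}} ⊂ ℝ^L. Suppose there exist a symmetric positive definite P ∈ ℝ^{n×n}, and for each v = 1,…,N_v matrices S_v ∈ ℝ^{m×n} and scalars α_v ≥ 0, β_v > 0, such that the symmetric (n+Ln+m)×(n+Ln+m)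 matrix with blocks (1,1) = −β_v I_n, (2,1) = −ω_v ⊗ P (stacking −(ω_v)_ℓ P), (3,1) = −S_v, remaining blocks zero, minus α_v Ψ, is positive semidefinite. Set K_v = S_v P⁻¹. Then for every plant (A_1,…,A_L,B) ∈ Σ_D(Φ), every θ ∈ conv(Ω), and every c ∈ ℝ^{N_v} with c_v ≥ 0, Σ_v c_v = 1, Σ_v c_v ω_v = θ, the matrix −((A(θ) + B K(θ))P + P(A(θ) + B K(θ))ᵀ) is positive definite, where A(θ) = Σ_ℓ θ_ℓ A_ℓ and K(θ) = Σ_v c_v K_v. Hence the gain-scheduled controller u = K(θ)x quadratically stabilizes every consistent LPV plant with common Lyapunov matrix P⁻¹. -/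
open Matrix

/-- The matrix `Ψ = RΦRᵀ` with `R = [I, X_δ; 0, -H]`. -/
noncomputable def psiMat {n m L T : ℕ}
    (Xm Xδ : Matrix (Fin n) (Fin T) ℝ) (U : Matrix (Fin m) (Fin T) ℝ)
    (Θd : Matrix (Fin L) (Fin T) ℝ)
    (Φ11 : Matrix (Fin n) (Fin n) ℝ) (Φ12 : Matrix (Fin n) (Fin T) ℝ)
    (Φ22 : Matrix (Fin T) (Fin T) ℝ) :
    Matrix (Fin n ⊕ (Fin L × Fin n ⊕ Fin m)) (Fin n ⊕ (Fin L × Fin n ⊕ Fin m)) ℝ :=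
  Matrix.fromBlocks (1 : Matrix (Fin n) (Fin n) ℝ) Xδ 0 (-(dataH Θd Xm U)) * Matrix.fromBlocks Φ11 Φ12 Φ12ᵀ Φ22
    * (Matrix.fromBlocks (1 : Matrix (Fin n) (Fin n) ℝ) Xδ 0 (-(dataH Θd Xm U)))ᵀ

/-- The matrix `[-(ω_v) ⊗ P; -S_v]` stacking the blocks `-(ω_v)_ℓ P` above `-S_v`. -/
def contStack {n m L : ℕ} (ω : Fin L → ℝ) (P : Matrix (Fin n) (Fin n) ℝ)
    (S : Matrix (Fin m) (Fin n) ℝ) : Matrix (Fin L × Fin n ⊕ Fin m) (Fin n) ℝ :=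
  Matrix.of fun r j => Sum.elim (fun li => -(ω li.1 * P li.2 j)) (fun i => -(S i j)) r

/- Auxiliary lemmas -/

lemma psd_smul' {n : ℕ} {c : ℝ} (hc : 0 ≤ c) {A : Matrix (Fin n) (Fin n) ℝ}
    (hA : A.PosSemidef) : (c • A).PosSemidef := by
  refine ⟨?_, fun x => ?_⟩
  · unfold Matrix.IsHermitian
    rw [conjTranspose_smul, hA.1]
    simp
  · exact (hA.smul hc).2 x

lemma psd_sum' {n N : ℕ} (f : Fin N → Matrix (Fin n) (Fin n) ℝ)
    (h : ∀ v, (f v).PosSemidef) : (∑ v, f v).PosSemidef := by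
  classical
  exact Finset.sum_induction f _ (fun a b ha hb => ha.add hb) Matrix.PosSemidef.zero
    (fun v _ => h v)

lemma pd_smul_one' {n : ℕ} {s : ℝ} (hs : 0 < s) :
    (s • (1 : Matrix (Fin n) (Fin n) ℝ)).PosDef := by
  rw [smul_one_eq_diagonal]
  exact Matrix.PosDef.diagonal (fun _ => hs)

lemma conjT_eq_T' {a b : Type*} (M : Matrix a b ℝ) : Mᴴ = Mᵀ := by
  ext i j; simp [conjTranspose_apply]

lemma ZC_eq' {n m L : ℕ} (A : Fin L → Matrix (Fin n) (Fin n) ℝ)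
    (B : Matrix (Fin n) (Fin m) ℝ) (w : Fin L → ℝ) (P : Matrix (Fin n) (Fin n) ℝ)
    (S : Matrix (Fin m) (Fin n) ℝ) :
    plantZ A B * contStack w P S = -((∑ ℓ, w ℓ • (A ℓ * P)) + B * S) := by
  ext i j
  simp only [plantZ, contStack, Matrix.mul_apply, Matrix.of_apply, Fintype.sum_sum_type,
    Sum.elim_inl, Sum.elim_inr, Fintype.sum_prod_type, Matrix.neg_apply, Matrix.add_apply,
    Matrix.sum_apply, Matrix.smul_apply, smul_eq_mul, Finset.mul_sum, neg_add]
  rw [← Finset.sum_neg_distrib, ← Finset.sum_neg_distrib]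
  congr 1
  · apply Finset.sum_congr rfl; intro ℓ _
    rw [← Finset.sum_neg_distrib]
    apply Finset.sum_congr rfl; intro k _; ring
  · apply Finset.sum_congr rfl; intro p _; ring

lemma conj_psi' {n m L T : ℕ} (Xδ W : Matrix (Fin n) (Fin T) ℝ)
    (H : Matrix (Fin L × Fin n ⊕ Fin m) (Fin T) ℝ)
    (Z : Matrix (Fin n) (Fin L × Fin n ⊕ Fin m) ℝ) (hW : W = Xδ - Z * H)
    (Φ11 : Matrix (Fin n) (Fin n) ℝ) (Φ12 : Matrix (Fin n) (Fin T) ℝ)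
    (Φ22 : Matrix (Fin T) (Fin T) ℝ) :
    Matrix.fromCols (1 : Matrix (Fin n) (Fin n) ℝ) Z *
      (Matrix.fromBlocks (1 : Matrix (Fin n) (Fin n) ℝ) Xδ 0 (-H)
        * Matrix.fromBlocks Φ11 Φ12 Φ12ᵀ Φ22
        * (Matrix.fromBlocks (1 : Matrix (Fin n) (Fin n) ℝ) Xδ 0 (-H))ᵀ) * (Matrix.fromCols (1 : Matrix (Fin n) (Fin n) ℝ) Z)ᵀ
    = Φ11 + W * Φ12ᵀ + Φ12 * Wᵀ + W * Φ22 * Wᵀ := by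
  have hGR : Matrix.fromCols (1 : Matrix (Fin n) (Fin n) ℝ) Z
      * Matrix.fromBlocks (1 : Matrix (Fin n) (Fin n) ℝ) Xδ 0 (-H)
      = Matrix.fromCols (1 : Matrix (Fin n) (Fin n) ℝ) W := by
    rw [fromCols_mul_fromBlocks]
    simp [hW, Matrix.mul_neg, sub_eq_add_neg]
  have key : Matrix.fromCols (1 : Matrix (Fin n) (Fin n) ℝ) Z *
      (Matrix.fromBlocks (1 : Matrix (Fin n) (Fin n) ℝ) Xδ 0 (-H)
        * Matrix.fromBlocks Φ11 Φ12 Φ12ᵀ Φ22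
        * (Matrix.fromBlocks (1 : Matrix (Fin n) (Fin n) ℝ) Xδ 0 (-H))ᵀ)
      * (Matrix.fromCols (1 : Matrix (Fin n) (Fin n) ℝ) Z)ᵀ
      = (Matrix.fromCols (1 : Matrix (Fin n) (Fin n) ℝ) Z
          * Matrix.fromBlocks (1 : Matrix (Fin n) (Fin n) ℝ) Xδ 0 (-H))
        * Matrix.fromBlocks Φ11 Φ12 Φ12ᵀ Φ22
        * ((Matrix.fromCols (1 : Matrix (Fin n) (Fin n) ℝ) Z
          * Matrix.fromBlocks (1 : Matrix (Fin n) (Fin n) ℝ) Xδ 0 (-H)))ᵀ := by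
    rw [transpose_mul]
    simp only [Matrix.mul_assoc]
  rw [key, hGR, transpose_fromCols, transpose_one, fromCols_mul_fromBlocks,
    fromCols_mul_fromRows]
  simp only [Matrix.one_mul, Matrix.mul_one, Matrix.add_mul, Matrix.mul_assoc]
  abel

lemma conj_blk' {n : ℕ} {ι : Type*} [Fintype ι] [DecidableEq ι]
    (Z : Matrix (Fin n) ι ℝ) (X : Matrix (Fin n) (Fin n) ℝ) (C : Matrix ι (Fin n) ℝ) :
    Matrix.fromCols (1 : Matrix (Fin n) (Fin n) ℝ) Z * Matrix.fromBlocks X Cᵀ C (0 : Matrix ι ι ℝ) * (Matrix.fromCols (1 : Matrix (Fin n) (Fin n) ℝ) Z)ᵀ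
      = X + Z * C + (Z * C)ᵀ := by
  rw [fromCols_mul_fromBlocks, transpose_fromCols, transpose_one,
    fromCols_mul_fromRows, transpose_mul]
  simp only [Matrix.one_mul, Matrix.mul_one, Matrix.mul_zero, add_zero]

/-- soundness of the continuous-time stabilization SDP, Eq. (27) of
the paper. If the vertex LMIs `[-β_v I, *, *; -ω_v⊗P, 0, *; -S_v, 0, 0] - α_v Ψ ⪰ 0`
are feasible with `P ≻ 0`, `α_v ≥ 0`, `β_v > 0`, then with `K_v = S_v P⁻¹` the
gain-scheduled controller quadratically stabilizes every consistent LPV plant: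
`-((A(θ) + BK(θ))P + P(A(θ) + BK(θ))ᵀ) ≻ 0` for all plants in `Σ_D(Φ)`, all
`θ ∈ conv(Ω)`, and all interpolating coefficients `c`. -/
theorem stmt15 {n m L T Nv : ℕ}
    (Xm Xδ : Matrix (Fin n) (Fin T) ℝ) (U : Matrix (Fin m) (Fin T) ℝ)
    (Θd : Matrix (Fin L) (Fin T) ℝ)
    (Φ11 : Matrix (Fin n) (Fin n) ℝ) (Φ12 : Matrix (Fin n) (Fin T) ℝ)
    (Φ22 : Matrix (Fin T) (Fin T) ℝ) (h11 : Φ11.IsSymm) (h22 : Φ22.IsSymm)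
    (ω : Fin Nv → (Fin L → ℝ))
    (P : Matrix (Fin n) (Fin n) ℝ) (hPs : P.IsSymm) (hP : P.PosDef)
    (S : Fin Nv → Matrix (Fin m) (Fin n) ℝ)
    (α β : Fin Nv → ℝ) (hα : ∀ v, 0 ≤ α v) (hβ : ∀ v, 0 < β v)
    (hLMI : ∀ v : Fin Nv,
      (Matrix.fromBlocks (-(β v • (1 : Matrix (Fin n) (Fin n) ℝ)))
          (contStack (ω v) P (S v))ᵀ (contStack (ω v) P (S v)) 0
        - α v • psiMat Xm Xδ U Θd Φ11 Φ12 Φ22).PosSemidef) :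
    ∀ (A : Fin L → Matrix (Fin n) (Fin n) ℝ) (B : Matrix (Fin n) (Fin m) ℝ),
      (Φ11 + (Xδ - plantZ A B * dataH Θd Xm U) * Φ12ᵀ
          + Φ12 * (Xδ - plantZ A B * dataH Θd Xm U)ᵀ
          + (Xδ - plantZ A B * dataH Θd Xm U) * Φ22
            * (Xδ - plantZ A B * dataH Θd Xm U)ᵀ).PosSemidef →
      ∀ θ ∈ convexHull ℝ (Set.range ω), ∀ c : Fin Nv → ℝ,
        (∀ v, 0 ≤ c v) → (∑ v, c v) = 1 → (∑ v, c v • ω v) = θ →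
        (-(((∑ ℓ, θ ℓ • A ℓ) + B * (∑ v, c v • (S v * P⁻¹))) * P
            + P * ((∑ ℓ, θ ℓ • A ℓ) + B * (∑ v, c v • (S v * P⁻¹)))ᵀ)).PosDef := by
  intro A B hcons θ hθ c hc hc1 hcω
  set Z := plantZ A B with hZ
  set H := dataH Θd Xm U with hH
  set W := Xδ - Z * H with hWdef
  set G : Matrix (Fin n) (Fin n ⊕ (Fin L × Fin n ⊕ Fin m)) ℝ := Matrix.fromCols 1 Z with hG
  set N := Φ11 + W * Φ12ᵀ + Φ12 * Wᵀ + W * Φ22 * Wᵀ with hN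
  have hNpsd : N.PosSemidef := hcons
  -- per-vertex matrices
  set Q : Fin Nv → Matrix (Fin n) (Fin n) ℝ :=
    fun v => (∑ ℓ, ω v ℓ • (A ℓ * P)) + B * S v with hQ
  -- per-vertex conjugated LMI
  have hv2 : ∀ v, ((-(Q v + (Q v)ᵀ)) - β v • 1).PosSemidef := by
    intro v
    have h1 := (hLMI v).mul_mul_conjTranspose_same G
    rw [conjT_eq_T'] at h1
    have h2 : G * (Matrix.fromBlocks (-(β v • (1 : Matrix (Fin n) (Fin n) ℝ)))
          (contStack (ω v) P (S v))ᵀ (contStack (ω v) P (S v)) 0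
        - α v • psiMat Xm Xδ U Θd Φ11 Φ12 Φ22) * Gᵀ
        = ((-(β v • 1)) + (-(Q v)) + (-(Q v))ᵀ) - α v • N := by
      have hQv : (∑ ℓ, ω v ℓ • (A ℓ * P)) + B * S v = Q v := rfl
      rw [Matrix.mul_sub, Matrix.sub_mul, Matrix.mul_smul, Matrix.smul_mul, hG]
      simp only [psiMat]
      rw [conj_blk', conj_psi' Xδ W H Z hWdef, hZ, ZC_eq' A B (ω v) P (S v), hQv, ← hN]
    rw [h2] at h1
    have h3 := h1.add (psd_smul' (hα v) hNpsd)
    have h4 : ((-(β v • (1 : Matrix (Fin n) (Fin n) ℝ))) + (-(Q v)) + (-(Q v))ᵀ)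
        - α v • N + α v • N = (-(Q v + (Q v)ᵀ)) - β v • 1 := by
      rw [transpose_neg]
      abel
    rwa [h4] at h3
  -- positive combination
  have hsum : (∑ v, c v • ((-(Q v + (Q v)ᵀ)) - β v • 1)).PosSemidef :=
    psd_sum' _ (fun v => psd_smul' (hc v) (hv2 v))
  set s : ℝ := ∑ v, c v * β v with hs_def
  have hsum_eq : (∑ v, c v • ((-(Q v + (Q v)ᵀ)) - β v • 1))
      = (-((∑ v, c v • Q v) + (∑ v, c v • Q v)ᵀ)) - s • 1 := by
    rw [hs_def, Finset.sum_smul, transpose_sum]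
    simp only [smul_sub, smul_add, smul_neg, smul_smul, transpose_smul]
    rw [Finset.sum_sub_distrib, Finset.sum_neg_distrib, Finset.sum_add_distrib]
  rw [hsum_eq] at hsum
  -- positivity of s
  have hex : ∃ v, 0 < c v := by
    by_contra hcon
    push_neg at hcon
    have hzero : ∀ v, c v = 0 := fun v => le_antisymm (hcon v) (hc v)
    simp [hzero] at hc1
  obtain ⟨v₀, hv₀⟩ := hex
  have hs : 0 < s := by
    rw [hs_def]
    exact Finset.sum_pos' (fun v _ => mul_nonneg (hc v) (hβ v).le)
      ⟨v₀, Finset.mem_univ v₀, mul_pos hv₀ (hβ v₀)⟩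
  -- identify the target matrix
  have hinv : P⁻¹ * P = 1 := Matrix.nonsing_inv_mul P (isUnit_iff_ne_zero.mpr hP.det_pos.ne')
  have hθℓ : ∀ ℓ, θ ℓ = ∑ v, c v * ω v ℓ := by
    intro ℓ
    rw [← hcω]
    simp [Finset.sum_apply]
  have hQc : ((∑ ℓ, θ ℓ • A ℓ) + B * (∑ v, c v • (S v * P⁻¹))) * P = ∑ v, c v • Q v := by
    have hAθ : (∑ ℓ, θ ℓ • A ℓ) * P = ∑ ℓ, θ ℓ • (A ℓ * P) := by
      rw [Finset.sum_mul]
      exact Finset.sum_congr rfl fun ℓ _ => Matrix.smul_mul _ _ _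
    have hKP : (∑ v, c v • (S v * P⁻¹)) * P = ∑ v, c v • S v := by
      rw [Matrix.sum_mul]
      refine Finset.sum_congr rfl fun v _ => ?_
      rw [Matrix.smul_mul, Matrix.mul_assoc, hinv, Matrix.mul_one]
    rw [Matrix.add_mul, hAθ, Matrix.mul_assoc, hKP, hQ]
    simp only [smul_add, Finset.sum_add_distrib, Matrix.mul_sum, Matrix.mul_smul]
    congr 1
    simp only [Finset.smul_sum, smul_smul]
    rw [Finset.sum_comm]
    refine Finset.sum_congr rfl fun ℓ _ => ?_
    rw [← Finset.sum_smul, ← hθℓ]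
  have htr : P * ((∑ ℓ, θ ℓ • A ℓ) + B * (∑ v, c v • (S v * P⁻¹)))ᵀ
      = (∑ v, c v • Q v)ᵀ := by
    rw [← hQc, transpose_mul, hPs]
  have hfinal : (-(((∑ ℓ, θ ℓ • A ℓ) + B * (∑ v, c v • (S v * P⁻¹))) * P
      + P * ((∑ ℓ, θ ℓ • A ℓ) + B * (∑ v, c v • (S v * P⁻¹)))ᵀ))
      = ((-((∑ v, c v • Q v) + (∑ v, c v • Q v)ᵀ)) - s • 1) + s • 1 := by
    rw [hQc, htr]
    abel
  rw [hfinal]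
  exact Matrix.PosDef.posSemidef_add hsum (pd_smul_one' hs)
end

section
/- (Soundness of the discrete-time stabilization SDP.) Let X₋, X_δ ∈ ℝ^{n×T}, U ∈ ℝ^{m×T}, Θdata ∈ ℝ^{L×T}, and Φ ∈ S^{n+T} with blocks Φ₁₁ ∈ S^n, Φ₁₂ ∈ ℝ^{n×T}, Φ₂₂ ∈ S^T. Let H ∈ ℝ^{(Ln+m)×T} stack the column-wise Khatri–Rao product Θdata ⊗_col X₋ above U, and Ψ = RΦRᵀ with R = [I_n, X_δ; 0, −H]. Let Σ_D(Φ) be the set of plants (A_1,…,A_L,B) whose discrepancy W = X_δ − [A_1,…,A_L,B] H satisfies Φ₁₁ + WΦ₁₂ᵀ + Φ₁₂Wᵀ + WΦ₂₂Wᵀ ⪰ 0. Let Ω = {ω_1,…,ω_{N_v}} ⊂ ℝ^L. Suppose there exist a symmetric positive definite P ∈ ℝ^{n×n}, and for each v matrices K_v ∈ ℝ^{m×n} and scalars α_v ≥ 0, β_v > 0, such that the symmetric (n+Ln+m)×(n+Ln+m) matrix with blocks (1,1) = P − β_v I_n, (2,2) = −(ω_v ω_vᵀ) ⊗ P, (3,2)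 = −ω_vᵀ ⊗ (K_v P), (3,3) = −K_v P K_vᵀ, remaining off-diagonal blocks zero, minus α_v Ψ, is positive semidefinite. Then for every plant (A_1,…,A_L,B) ∈ Σ_D(Φ), every θ ∈ conv(Ω), and every c ∈ ℝ^{N_v} with c_v ≥ 0, Σ_v c_v = 1, Σ_v c_v ω_v = θ, the 2n×2n block matrix [P, (A(θ) + B K(θ))P; P(A(θ) + B K(θ))ᵀ, P] is positive definite, where A(θ) = Σ_ℓ θ_ℓ A_ℓ and K(θ) = Σ_v c_v K_v. Hence the gain-scheduled controller u = K(θ)x quadratically stabilizes every consistent discrete-time LPV plant with common Lyapunov matrix P⁻¹. -/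
open Matrix

/-- The `(Ln+m)×(Ln+m)` lower-right block
`[-(ωωᵀ)⊗P, (-ωᵀ⊗(KP))ᵀ; -ωᵀ⊗(KP), -KPKᵀ]` of the discrete-time vertex matrix. -/
noncomputable def discBlock {n m L : ℕ} (ω : Fin L → ℝ)
    (P : Matrix (Fin n) (Fin n) ℝ) (K : Matrix (Fin m) (Fin n) ℝ) :
    Matrix (Fin L × Fin n ⊕ Fin m) (Fin L × Fin n ⊕ Fin m) ℝ :=
  Matrix.fromBlocks
    (Matrix.of fun p q => -(ω p.1 * ω q.1 * P p.2 q.2))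
    (Matrix.of (fun i q => -(ω q.1 * (K * P) i q.2)) :
      Matrix (Fin m) (Fin L × Fin n) ℝ)ᵀ
    (Matrix.of fun i q => -(ω q.1 * (K * P) i q.2))
    (-(K * P * Kᵀ))

private lemma rconj {p q : Type*} (M : Matrix p q ℝ) : Mᴴ = Mᵀ := by
  ext i j; simp [Matrix.conjTranspose_apply]

private lemma star_vec {p : Type*} (y : p → ℝ) : star y = y := by
  ext i; simp

private lemma psd_smul {k : Type*} [Fintype k] {M : Matrix k k ℝ} (hM : M.PosSemidef) {c : ℝ}
    (hc : 0 ≤ c) : (c • M).PosSemidef := by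
  refine Matrix.PosSemidef.of_dotProduct_mulVec_nonneg ?_ fun x => ?_
  · show _ᴴ = _
    rw [Matrix.conjTranspose_smul, hM.1.eq]; simp
  · rw [smul_mulVec, dotProduct_smul, smul_eq_mul]
    exact mul_nonneg hc (hM.dotProduct_mulVec_nonneg x)

private lemma quad_congr {p q : Type*} [Fintype p] [Fintype q] (E : Matrix p q ℝ)
    (S : Matrix q q ℝ) (u : p → ℝ) :
    u ⬝ᵥ ((E * S * Eᵀ) *ᵥ u) = (Eᵀ *ᵥ u) ⬝ᵥ (S *ᵥ (Eᵀ *ᵥ u)) := by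
  rw [← Matrix.mulVec_mulVec, ← Matrix.mulVec_mulVec, Matrix.dotProduct_mulVec,
    Matrix.mulVec_transpose]

private lemma pd_sum {k ι : Type*} [Fintype k] [Fintype ι] {c : ι → ℝ}
    {M : ι → Matrix k k ℝ} (hc : ∀ v, 0 ≤ c v) (hc1 : (∑ v, c v) = 1)
    (hM : ∀ v, (M v).PosDef) : (∑ v, c v • M v).PosDef := by
  obtain ⟨v0, hv0⟩ : ∃ v, 0 < c v := by
    by_contra h
    push_neg at h
    have h0 : ∀ v, c v = 0 := fun v => le_antisymm (h v) (hc v)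
    simp [h0] at hc1
  have hsx : ∀ x : k → ℝ, star x = x := fun x => by ext i; simp
  refine Matrix.PosDef.of_dotProduct_mulVec_pos ?_ fun x hx => ?_
  · show _ᴴ = _
    rw [Matrix.conjTranspose_sum]
    refine Finset.sum_congr rfl fun v _ => ?_
    rw [Matrix.conjTranspose_smul, (hM v).isHermitian.eq]; simp
  · have h12 : x ⬝ᵥ ((∑ v, c v • M v) *ᵥ x) = ∑ v, c v * (x ⬝ᵥ (M v *ᵥ x)) := by
      have h1 : (∑ v, c v • M v) *ᵥ x = ∑ v, c v • (M v *ᵥ x) := by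
        ext a
        simp only [Matrix.mulVec, dotProduct, Matrix.sum_apply, Matrix.smul_apply,
          Finset.sum_apply, Pi.smul_apply, smul_eq_mul, Finset.sum_mul]
        rw [Finset.sum_comm]
        refine Finset.sum_congr rfl fun v _ => ?_
        rw [Finset.mul_sum]
        exact Finset.sum_congr rfl fun j _ => by ring
      rw [h1]
      simp only [dotProduct, Finset.sum_apply, Pi.smul_apply, smul_eq_mul, Finset.mul_sum]
      rw [Finset.sum_comm]
      exact Finset.sum_congr rfl fun v _ => Finset.sum_congr rfl fun a _ => by ring
    rw [hsx, h12]
    refine Finset.sum_pos' (fun v _ => mul_nonneg (hc v) ?_) ⟨v0, Finset.mem_univ _, ?_⟩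
    · have := (hM v).posSemidef.dotProduct_mulVec_nonneg x; rwa [hsx] at this
    · refine mul_pos hv0 ?_
      have := (hM v0).dotProduct_mulVec_pos hx; rwa [hsx] at this

private lemma block_pd {k : ℕ} {P X : Matrix (Fin k) (Fin k) ℝ} (hP : P.PosDef)
    (hPs : Pᵀ = P) (hS : (P - X * P * Xᵀ).PosDef) :
    (Matrix.fromBlocks P (X * P) (P * Xᵀ) P).PosDef := by
  set S := P - X * P * Xᵀ with hSdef
  have hSP : S + X * P * Xᵀ = P := sub_add_cancel P (X * P * Xᵀ)
  have key : Matrix.fromBlocks P (X * P) (P * Xᵀ) P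
      = fromRows (1 : Matrix (Fin k) (Fin k) ℝ) (0 : Matrix (Fin k) (Fin k) ℝ) * S *
          (fromRows (1 : Matrix (Fin k) (Fin k) ℝ) (0 : Matrix (Fin k) (Fin k) ℝ))ᵀ
        + fromRows X (1 : Matrix (Fin k) (Fin k) ℝ) * P *
          (fromRows X (1 : Matrix (Fin k) (Fin k) ℝ))ᵀ := by
    have e1 : fromRows (1 : Matrix (Fin k) (Fin k) ℝ) (0 : Matrix (Fin k) (Fin k) ℝ) * S *
        (fromRows (1 : Matrix (Fin k) (Fin k) ℝ) (0 : Matrix (Fin k) (Fin k) ℝ))ᵀ = fromBlocks S 0 0 0 := by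
      rw [transpose_fromRows, fromRows_mul, fromRows_mul_fromCols, transpose_one,
        transpose_zero]
      simp
    have e2 : fromRows X (1 : Matrix (Fin k) (Fin k) ℝ) * P *
        (fromRows X (1 : Matrix (Fin k) (Fin k) ℝ))ᵀ
        = fromBlocks (X * P * Xᵀ) (X * P) (P * Xᵀ) P := by
      rw [transpose_fromRows, fromRows_mul, fromRows_mul_fromCols, transpose_one]
      simp
    rw [e1, e2, fromBlocks_add, hSP]
    simp
  have psd : (Matrix.fromBlocks P (X * P) (P * Xᵀ) P).PosSemidef := by
    rw [key]
    have t1 := hS.posSemidef.mul_mul_conjTranspose_same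
      (fromRows (1 : Matrix (Fin k) (Fin k) ℝ) (0 : Matrix (Fin k) (Fin k) ℝ))
    have t2 := hP.posSemidef.mul_mul_conjTranspose_same
      (fromRows X (1 : Matrix (Fin k) (Fin k) ℝ))
    rw [rconj] at t1 t2
    exact t1.add t2
  refine Matrix.PosDef.of_dotProduct_mulVec_pos psd.isHermitian fun u hu => ?_
  have hu' : u = Sum.elim (u ∘ Sum.inl) (u ∘ Sum.inr) := (Sum.elim_comp_inl_inr u).symm
  have hw1 : (fromRows (1 : Matrix (Fin k) (Fin k) ℝ) (0 : Matrix (Fin k) (Fin k) ℝ))ᵀ *ᵥ u = u ∘ Sum.inl := by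
    rw [transpose_fromRows, transpose_one, transpose_zero]
    conv_lhs => rw [hu']
    rw [fromCols_mulVec_sumElim]
    simp
  have hw2 : (fromRows X (1 : Matrix (Fin k) (Fin k) ℝ))ᵀ *ᵥ u
      = Xᵀ *ᵥ (u ∘ Sum.inl) + u ∘ Sum.inr := by
    rw [transpose_fromRows, transpose_one]
    conv_lhs => rw [hu']
    rw [fromCols_mulVec_sumElim]
    simp
  rw [_root_.star_vec, key, Matrix.add_mulVec, dotProduct_add, quad_congr, quad_congr, hw1, hw2]
  by_cases hx : u ∘ Sum.inl = 0
  · have hy : u ∘ Sum.inr ≠ 0 := by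
      intro hy
      apply hu
      rw [hu', hx, hy]
      ext (i | i) <;> rfl
    have e1 : (u ∘ Sum.inl) ⬝ᵥ (S *ᵥ (u ∘ Sum.inl)) = 0 := by rw [hx]; simp
    have e2 : Xᵀ *ᵥ (u ∘ Sum.inl) + u ∘ Sum.inr = u ∘ Sum.inr := by rw [hx]; simp
    rw [e1, e2, zero_add]
    have := hP.dotProduct_mulVec_pos hy
    rwa [_root_.star_vec] at this
  · have p1 : 0 < (u ∘ Sum.inl) ⬝ᵥ (S *ᵥ (u ∘ Sum.inl)) := by
      have := hS.dotProduct_mulVec_pos hx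
      rwa [_root_.star_vec] at this
    have p2 : 0 ≤ (Xᵀ *ᵥ (u ∘ Sum.inl) + u ∘ Sum.inr) ⬝ᵥ
        (P *ᵥ (Xᵀ *ᵥ (u ∘ Sum.inl) + u ∘ Sum.inr)) := by
      have := hP.posSemidef.dotProduct_mulVec_nonneg (Xᵀ *ᵥ (u ∘ Sum.inl) + u ∘ Sum.inr)
      rwa [_root_.star_vec] at this
    linarith

/-- soundness of the discrete-time stabilization SDP, Eq. (32) of
the paper. If the vertex LMIs
`[P - β_v I, *, *; 0, -(ω_vω_vᵀ)⊗P, *; 0, -ω_vᵀ⊗(K_vP), -K_vPK_vᵀ] - α_v Ψ ⪰ 0`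
are feasible with `P ≻ 0`, `α_v ≥ 0`, `β_v > 0`, then the gain-scheduled controller
built from the `K_v` quadratically stabilizes every consistent discrete-time LPV
plant: `[P, (A(θ)+BK(θ))P; P(A(θ)+BK(θ))ᵀ, P] ≻ 0` for all plants in `Σ_D(Φ)`, all
`θ ∈ conv(Ω)`, and all interpolating coefficients `c`. -/
theorem stmt16 {n m L T Nv : ℕ}
    (Xm Xδ : Matrix (Fin n) (Fin T) ℝ) (U : Matrix (Fin m) (Fin T) ℝ)
    (Θd : Matrix (Fin L) (Fin T) ℝ)
    (Φ11 : Matrix (Fin n) (Fin n) ℝ) (Φ12 : Matrix (Fin n) (Fin T) ℝ)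
    (Φ22 : Matrix (Fin T) (Fin T) ℝ) (h11 : Φ11.IsSymm) (h22 : Φ22.IsSymm)
    (ω : Fin Nv → (Fin L → ℝ))
    (P : Matrix (Fin n) (Fin n) ℝ) (hPs : P.IsSymm) (hP : P.PosDef)
    (K : Fin Nv → Matrix (Fin m) (Fin n) ℝ)
    (α β : Fin Nv → ℝ) (hα : ∀ v, 0 ≤ α v) (hβ : ∀ v, 0 < β v)
    (hLMI : ∀ v : Fin Nv,
      (Matrix.fromBlocks (P - β v • (1 : Matrix (Fin n) (Fin n) ℝ)) 0 0
          (discBlock (ω v) P (K v))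
        - α v • psiMat Xm Xδ U Θd Φ11 Φ12 Φ22).PosSemidef) :
    ∀ (A : Fin L → Matrix (Fin n) (Fin n) ℝ) (B : Matrix (Fin n) (Fin m) ℝ),
      (Φ11 + (Xδ - plantZ A B * dataH Θd Xm U) * Φ12ᵀ
          + Φ12 * (Xδ - plantZ A B * dataH Θd Xm U)ᵀ
          + (Xδ - plantZ A B * dataH Θd Xm U) * Φ22
            * (Xδ - plantZ A B * dataH Θd Xm U)ᵀ).PosSemidef →
      ∀ θ ∈ convexHull ℝ (Set.range ω), ∀ c : Fin Nv → ℝ,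
        (∀ v, 0 ≤ c v) → (∑ v, c v) = 1 → (∑ v, c v • ω v) = θ →
        (Matrix.fromBlocks P
            (((∑ ℓ, θ ℓ • A ℓ) + B * (∑ v, c v • K v)) * P)
            (P * ((∑ ℓ, θ ℓ • A ℓ) + B * (∑ v, c v • K v))ᵀ)
            P).PosDef := by
  intro A B hW θ hθ c hc hc1 hcθ
  classical
  set Z := plantZ A B with hZdef
  set H := dataH Θd Xm U with hHdef
  set W := Xδ - Z * H with hWdef
  have hsym : ∀ a b, P a b = P b a := fun a b => (hPs.apply a b).symm
  -- the Khatri-Rao selector matrices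
  set G : Fin Nv → Matrix (Fin L × Fin n) (Fin n) ℝ :=
    fun v => Matrix.of fun p j => if p.2 = j then ω v p.1 else 0 with hGdef
  set ZA : Matrix (Fin n) (Fin L × Fin n) ℝ := Matrix.of fun i p => A p.1 i p.2 with hZAdef
  set Acl : Fin Nv → Matrix (Fin n) (Fin n) ℝ :=
    fun v => (∑ ℓ, ω v ℓ • A ℓ) + B * K v with hAcldef
  have hZcol : Z = fromCols ZA B := rfl
  -- discBlock as a congruence
  have hGP : ∀ v, G v * P = Matrix.of fun p j => ω v p.1 * P p.2 j := by
    intro v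
    ext p j
    simp [hGdef, Matrix.mul_apply, ite_mul, Finset.sum_ite_eq]
  have hD : ∀ v, discBlock (ω v) P (K v)
      = -(fromRows (G v) (K v) * P * (fromRows (G v) (K v))ᵀ) := by
    intro v
    have hblocks : fromRows (G v) (K v) * P * (fromRows (G v) (K v))ᵀ
        = fromBlocks (G v * P * (G v)ᵀ) (G v * P * (K v)ᵀ)
            (K v * P * (G v)ᵀ) (K v * P * (K v)ᵀ) := by
      rw [transpose_fromRows, fromRows_mul, fromRows_mul_fromCols]
    have hGPGt : G v * P * (G v)ᵀ
        = Matrix.of fun p q => ω v p.1 * ω v q.1 * P p.2 q.2 := by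
      rw [hGP v]
      ext p q
      simp [hGdef, Matrix.mul_apply, mul_ite, Finset.sum_ite_eq]
      ring
    have hGPKt : G v * P * (K v)ᵀ
        = Matrix.of fun p i => ω v p.1 * (K v * P) i p.2 := by
      rw [hGP v]
      ext p i
      simp only [Matrix.mul_apply, Matrix.of_apply, Matrix.transpose_apply, Finset.mul_sum]
      refine Finset.sum_congr rfl fun j _ => ?_
      rw [hsym p.2 j]
      ring
    have hKPGt : K v * P * (G v)ᵀ
        = Matrix.of fun i q => ω v q.1 * (K v * P) i q.2 := by
      ext i q
      rw [Matrix.mul_apply]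
      simp [hGdef, Matrix.mul_apply, mul_ite, Finset.sum_ite_eq]
      ring
    rw [hblocks, hGPGt, hGPKt, hKPGt]
    unfold discBlock
    ext (p | i) (q | j) <;>
      simp [Matrix.fromBlocks, Matrix.neg_apply, Matrix.transpose_apply]
  -- Z times the selector gives the closed loop matrix
  have hZF : ∀ v, Z * fromRows (G v) (K v) = Acl v := by
    intro v
    rw [hZcol, fromCols_mul_fromRows]
    have : ZA * G v = ∑ ℓ, ω v ℓ • A ℓ := by
      ext i j
      simp only [hZAdef, hGdef, Matrix.mul_apply, Matrix.of_apply, Matrix.sum_apply,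
        Matrix.smul_apply, smul_eq_mul, mul_ite, mul_zero]
      rw [Fintype.sum_prod_type]
      simp [Finset.sum_ite_eq']
      exact Finset.sum_congr rfl fun ℓ _ => mul_comm _ _
    rw [this, hAcldef]
  -- the congruence matrix E = [I  Z]
  set E : Matrix (Fin n) (Fin n ⊕ (Fin L × Fin n ⊕ Fin m)) ℝ :=
    fromCols (1 : Matrix (Fin n) (Fin n) ℝ) Z with hEdef
  have hEΨ : E * psiMat Xm Xδ U Θd Φ11 Φ12 Φ22 * Eᵀ
      = Φ11 + W * Φ12ᵀ + Φ12 * Wᵀ + W * Φ22 * Wᵀ := by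
    unfold psiMat
    rw [← hHdef]
    have hER : E * Matrix.fromBlocks (1 : Matrix (Fin n) (Fin n) ℝ) Xδ 0 (-H) = fromCols (1 : Matrix (Fin n) (Fin n) ℝ) W := by
      rw [hEdef, fromCols_mul_fromBlocks, Matrix.one_mul, Matrix.one_mul,
        Matrix.mul_zero, Matrix.mul_neg, add_zero, ← sub_eq_add_neg, ← hWdef]
    calc E * (Matrix.fromBlocks (1 : Matrix (Fin n) (Fin n) ℝ) Xδ 0 (-H) * Matrix.fromBlocks Φ11 Φ12 Φ12ᵀ Φ22
          * (Matrix.fromBlocks (1 : Matrix (Fin n) (Fin n) ℝ) Xδ 0 (-H))ᵀ) * Eᵀ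
        = (E * Matrix.fromBlocks (1 : Matrix (Fin n) (Fin n) ℝ) Xδ 0 (-H)) * Matrix.fromBlocks Φ11 Φ12 Φ12ᵀ Φ22
          * (E * Matrix.fromBlocks (1 : Matrix (Fin n) (Fin n) ℝ) Xδ 0 (-H))ᵀ := by
          rw [Matrix.transpose_mul]
          simp only [Matrix.mul_assoc]
      _ = Φ11 + W * Φ12ᵀ + Φ12 * Wᵀ + W * Φ22 * Wᵀ := by
          rw [hER, fromCols_mul_fromBlocks, transpose_fromCols, transpose_one,
            fromCols_mul_fromRows, Matrix.one_mul, Matrix.one_mul, Matrix.add_mul,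
            Matrix.add_mul, Matrix.mul_one, Matrix.mul_one]
          abel
  have hEB : ∀ v, E * Matrix.fromBlocks (P - β v • (1 : Matrix (Fin n) (Fin n) ℝ)) 0 0
        (discBlock (ω v) P (K v)) * Eᵀ
      = (P - β v • (1 : Matrix (Fin n) (Fin n) ℝ)) - Acl v * P * (Acl v)ᵀ := by
    intro v
    rw [hEdef, fromCols_mul_fromBlocks]
    simp only [Matrix.one_mul, Matrix.mul_zero, add_zero, zero_add]
    rw [transpose_fromCols, transpose_one, fromCols_mul_fromRows, Matrix.mul_one,
      hD v, Matrix.mul_neg, Matrix.neg_mul, ← sub_eq_add_neg]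
    congr 1
    calc Z * (fromRows (G v) (K v) * P * (fromRows (G v) (K v))ᵀ) * Zᵀ
        = (Z * fromRows (G v) (K v)) * P * (Z * fromRows (G v) (K v))ᵀ := by
          rw [Matrix.transpose_mul]
          simp only [Matrix.mul_assoc]
      _ = Acl v * P * (Acl v)ᵀ := by rw [hZF v]
  -- the vertex inequalities transported through E
  have hSv : ∀ v, ((P - β v • (1 : Matrix (Fin n) (Fin n) ℝ)) - Acl v * P * (Acl v)ᵀ
      - α v • (Φ11 + W * Φ12ᵀ + Φ12 * Wᵀ + W * Φ22 * Wᵀ)).PosSemidef := by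
    intro v
    have h := (hLMI v).mul_mul_conjTranspose_same E
    rw [rconj] at h
    have heq : E * (Matrix.fromBlocks (P - β v • (1 : Matrix (Fin n) (Fin n) ℝ)) 0 0
          (discBlock (ω v) P (K v)) - α v • psiMat Xm Xδ U Θd Φ11 Φ12 Φ22) * Eᵀ
        = ((P - β v • (1 : Matrix (Fin n) (Fin n) ℝ)) - Acl v * P * (Acl v)ᵀ)
          - α v • (Φ11 + W * Φ12ᵀ + Φ12 * Wᵀ + W * Φ22 * Wᵀ) := by
      rw [Matrix.mul_sub, Matrix.sub_mul, Matrix.mul_smul, Matrix.smul_mul, hEB v, hEΨ]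
    rwa [heq] at h
  have hSvPD : ∀ v, (P - Acl v * P * (Acl v)ᵀ).PosDef := by
    intro v
    have hM := (hSv v).add (psd_smul hW (hα v))
    have ecan : (P - β v • (1 : Matrix (Fin n) (Fin n) ℝ)) - Acl v * P * (Acl v)ᵀ
        - α v • (Φ11 + W * Φ12ᵀ + Φ12 * Wᵀ + W * Φ22 * Wᵀ)
        + α v • (Φ11 + W * Φ12ᵀ + Φ12 * Wᵀ + W * Φ22 * Wᵀ)
        = (P - β v • (1 : Matrix (Fin n) (Fin n) ℝ)) - Acl v * P * (Acl v)ᵀ := by abel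
    rw [ecan] at hM
    have hβ1 : ((β v) • (1 : Matrix (Fin n) (Fin n) ℝ)).PosDef := by
      rw [Matrix.smul_one_eq_diagonal]
      exact Matrix.posDef_diagonal_iff.mpr fun i => hβ v
    have hsum := Matrix.PosDef.posSemidef_add hM hβ1
    have : (P - β v • (1 : Matrix (Fin n) (Fin n) ℝ)) - Acl v * P * (Acl v)ᵀ
        + β v • (1 : Matrix (Fin n) (Fin n) ℝ) = P - Acl v * P * (Acl v)ᵀ := by abel
    rwa [this] at hsum
  have hMv : ∀ v, (Matrix.fromBlocks P (Acl v * P) (P * (Acl v)ᵀ) P).PosDef :=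
    fun v => block_pd hP hPs (hSvPD v)
  -- the closed-loop matrix is the convex combination of the vertex ones
  have hAcl : (∑ ℓ, θ ℓ • A ℓ) + B * (∑ v, c v • K v) = ∑ v, c v • Acl v := by
    have hθℓ : ∀ ℓ, θ ℓ = ∑ v, c v * ω v ℓ := by
      intro ℓ
      rw [← hcθ]
      simp
    rw [hAcldef]
    simp only [smul_add, Finset.sum_add_distrib]
    congr 1
    · simp_rw [hθℓ, Finset.sum_smul, Finset.smul_sum, smul_smul]
      exact Finset.sum_comm
    · rw [Matrix.mul_sum]
      simp_rw [Matrix.mul_smul]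
  have hfinal : Matrix.fromBlocks P
        (((∑ ℓ, θ ℓ • A ℓ) + B * (∑ v, c v • K v)) * P)
        (P * ((∑ ℓ, θ ℓ • A ℓ) + B * (∑ v, c v • K v))ᵀ) P
      = ∑ v, c v • Matrix.fromBlocks P (Acl v * P) (P * (Acl v)ᵀ) P := by
    rw [hAcl]
    ext (i | i) (j | j) <;>
      simp only [Matrix.fromBlocks_apply₁₁, Matrix.fromBlocks_apply₁₂,
        Matrix.fromBlocks_apply₂₁, Matrix.fromBlocks_apply₂₂, Matrix.sum_apply,
        Matrix.smul_apply, Matrix.mul_apply, Matrix.transpose_apply,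
        Matrix.transpose_sum, Matrix.transpose_smul, Finset.sum_apply,
        Pi.smul_apply, smul_eq_mul, Finset.sum_mul, Finset.mul_sum]
    · rw [← Finset.sum_mul, hc1, one_mul]
    · exact Finset.sum_congr rfl fun v _ => Finset.sum_congr rfl fun a _ => by ring
    · exact Finset.sum_congr rfl fun v _ => Finset.sum_congr rfl fun a _ => by ring
    · rw [← Finset.sum_mul, hc1, one_mul]
  rw [hfinal]
  exact pd_sum hc hc1 hMv
end
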